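/- Let a be a positive real algebraic number with a ≠ 1, and let b = p/q where p and q are positive coprime integers, with b ≠ 1 and a ≠ b. Let A be the diagonal matrix [[a,0],[0,b]], and let G be an additive subgroup of ℝ² containing (1,1) that is A-invariant, i.e. {vA : v ∈ G} = G. Then I(G) strictly contains { Aⁿ : n ∈ ℤ }. -/

import Mathlib

open Matrix Polynomial

noncomputable def Dg (α β : ℝ) : Matrix (Fin 2) (Fin 2) ℝ := Matrix.of ![![α, 0], ![0, β]]

lemma Dg_mul (α β γ δ : ℝ) : Dg α β * Dg γ δ = Dg (α*γ) (β*δ) := by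
  ext i j
  fin_cases i <;> fin_cases j <;>
    simp [Dg, Matrix.mul_apply, Fin.sum_univ_two]

lemma Dg_one : (1 : Matrix (Fin 2) (Fin 2) ℝ) = Dg 1 1 := by
  ext i j
  fin_cases i <;> fin_cases j <;> simp [Dg, Matrix.one_apply]

lemma Dg_det (α β : ℝ) : (Dg α β).det = α * β := by
  simp [Dg, Matrix.det_fin_two_of]

lemma Dg_pow (α β : ℝ) (k : ℕ) : (Dg α β)^k = Dg (α^k) (β^k) := by
  induction k with
  | zero => simpa using Dg_one
  | succ n ih => rw [pow_succ, ih, Dg_mul, ← pow_succ, ← pow_succ]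

lemma Dg_inv (α β : ℝ) (hα : α ≠ 0) (hβ : β ≠ 0) : (Dg α β)⁻¹ = Dg α⁻¹ β⁻¹ := by
  apply Matrix.inv_eq_right_inv
  rw [Dg_mul, mul_inv_cancel₀ hα, mul_inv_cancel₀ hβ, Dg_one]

lemma Dg_zpow (α β : ℝ) (hα : α ≠ 0) (hβ : β ≠ 0) (n : ℤ) :
    (Dg α β)^n = Dg (α^n) (β^n) := by
  cases n with
  | ofNat k => rw [Int.ofNat_eq_coe, zpow_natCast, zpow_natCast, zpow_natCast, Dg_pow]
  | negSucc k =>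
      rw [zpow_negSucc, zpow_negSucc, zpow_negSucc, Dg_pow,
        Dg_inv _ _ (pow_ne_zero _ hα) (pow_ne_zero _ hβ)]

lemma Dg_vecMul (α β : ℝ) (v : Fin 2 → ℝ) :
    Matrix.vecMul v (Dg α β) = ![α * v 0, β * v 1] := by
  funext j
  fin_cases j <;>
    simp [Dg, Matrix.vecMul, dotProduct, Fin.sum_univ_two, mul_comm]

lemma img_inv (C : Matrix (Fin 2) (Fin 2) ℝ) (hC : IsUnit C.det)
    (S : Set (Fin 2 → ℝ)) (h : (fun v => Matrix.vecMul v C) '' S = S) :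
    (fun v => Matrix.vecMul v C⁻¹) '' S = S := by
  apply Set.Subset.antisymm
  · rintro _ ⟨w, hw, rfl⟩
    rw [← h] at hw
    obtain ⟨u, hu, rfl⟩ := hw
    simpa [Matrix.vecMul_vecMul, Matrix.mul_nonsing_inv C hC] using hu
  · intro v hv
    refine ⟨Matrix.vecMul v C, ?_, ?_⟩
    · rw [← h]; exact ⟨v, hv, rfl⟩
    · simp [Matrix.vecMul_vecMul, Matrix.mul_nonsing_inv C hC]

lemma img_pow (C : Matrix (Fin 2) (Fin 2) ℝ)
    (S : Set (Fin 2 → ℝ)) (h : (fun v => Matrix.vecMul v C) '' S = S) (k : ℕ) :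
    (fun v => Matrix.vecMul v (C ^ k)) '' S = S := by
  induction k with
  | zero => simp
  | succ n ih =>
      have : (fun v => Matrix.vecMul v (C ^ (n+1)))
          = (fun v => Matrix.vecMul v C) ∘ (fun v => Matrix.vecMul v (C ^ n)) := by
        funext v; simp [Matrix.vecMul_vecMul, pow_succ]
      rw [this, Set.image_comp, ih, h]

lemma exists_int_poly (a : ℝ) (halg : IsAlgebraic ℚ a) (bq : ℚ) (hab : a ≠ (bq : ℝ)) :
    ∃ g : Polynomial ℤ, (Polynomial.aeval a) g = 0 ∧ (Polynomial.aeval bq) g ≠ 0 := by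
  have halg' : IsAlgebraic ℤ a := (IsFractionRing.isAlgebraic_iff ℤ ℚ ℝ).mpr halg
  obtain ⟨g₀, hg₀ne, hg₀⟩ := halg'
  set P : Polynomial ℚ := g₀.map (algebraMap ℤ ℚ) with hP
  have hPne : P ≠ 0 := by
    rw [hP, Ne, Polynomial.map_eq_zero_iff (algebraMap ℤ ℚ).injective_int]
    exact hg₀ne
  set m := rootMultiplicity bq P with hm
  set P₁ := P /ₘ (X - C bq) ^ m with hP₁
  have h1 : eval bq P₁ ≠ 0 := eval_divByMonic_pow_rootMultiplicity_ne_zero bq hPne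
  have h2 : (X - C bq) ^ m * P₁ = P := pow_mul_divByMonic_rootMultiplicity_eq P bq
  have hPa : (Polynomial.aeval a) P = 0 := by
    rw [hP, Polynomial.aeval_map_algebraMap]
    exact hg₀
  have hP₁a : (Polynomial.aeval a) P₁ = 0 := by
    rw [← h2, _root_.map_mul] at hPa
    have hne : (Polynomial.aeval a) ((X - C bq) ^ m) ≠ 0 := by
      rw [map_pow]
      apply pow_ne_zero
      simpa [sub_eq_zero] using hab
    exact (mul_eq_zero.mp hPa).resolve_left hne
  refine ⟨IsLocalization.integerNormalization (nonZeroDivisors ℤ) P₁, ?_, ?_⟩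
  · exact IsLocalization.integerNormalization_aeval_eq_zero (nonZeroDivisors ℤ) P₁ hP₁a
  · obtain ⟨n, hn⟩ := IsLocalization.integerNormalization_map_to_map (nonZeroDivisors ℤ) P₁
    have : (Polynomial.aeval bq) (IsLocalization.integerNormalization (nonZeroDivisors ℤ) P₁)
        = eval bq ((IsLocalization.integerNormalization (nonZeroDivisors ℤ) P₁).map
            (algebraMap ℤ ℚ)) := by
      rw [Polynomial.eval_map, Polynomial.aeval_def]
    rw [this, hn]
    have hnne : ((n : ℤ) : ℚ) ≠ 0 := by
      exact_mod_cast nonZeroDivisors.coe_ne_zero n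
    rw [Polynomial.eval_smul, zsmul_eq_mul]
    exact mul_ne_zero hnne h1

lemma key_arith (P : ℤ) (N : ℤ) (hN : N ≠ 0) :
    ∃ t e : ℕ, 1 ≤ t ∧ ∃ u : ℤ, P ^ e * (P ^ t - 1) = N * u := by
  set n := N.natAbs with hn
  have hn0 : n ≠ 0 := Int.natAbs_ne_zero.mpr hN
  haveI : NeZero n := ⟨hn0⟩
  have hcard : Fintype.card (ZMod n) < Fintype.card (Fin (n + 1)) := by
    simp [ZMod.card]
  obtain ⟨i, j, hij, hF⟩ := Fintype.exists_ne_map_eq_of_card_lt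
    (fun k : Fin (n + 1) => ((P ^ (k : ℕ) : ℤ) : ZMod n)) hcard
  rcases hij.lt_or_gt with hlt | hlt
  case _ =>
    refine ⟨(j : ℕ) - i, i, by omega, ?_⟩
    have hdvd : (n : ℤ) ∣ P ^ (j : ℕ) - P ^ (i : ℕ) := by
      rw [← ZMod.intCast_zmod_eq_zero_iff_dvd]
      push_cast
      rw [sub_eq_zero]
      exact_mod_cast hF.symm
    rw [Int.natAbs_dvd] at hdvd
    obtain ⟨u, hu⟩ := hdvd
    refine ⟨u, ?_⟩
    have hexp : (i : ℕ) + ((j : ℕ) - (i : ℕ)) = (j : ℕ) := by omega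
    rw [mul_sub, mul_one, ← pow_add, hexp, ← hu]
  case _ =>
    refine ⟨(i : ℕ) - j, j, by omega, ?_⟩
    have hdvd : (n : ℤ) ∣ P ^ (i : ℕ) - P ^ (j : ℕ) := by
      rw [← ZMod.intCast_zmod_eq_zero_iff_dvd]
      push_cast
      rw [sub_eq_zero]
      exact_mod_cast hF
    rw [Int.natAbs_dvd] at hdvd
    obtain ⟨u, hu⟩ := hdvd
    refine ⟨u, ?_⟩
    have hexp : (j : ℕ) + ((i : ℕ) - (j : ℕ)) = (i : ℕ) := by omega
    rw [mul_sub, mul_one, ← pow_add, hexp, ← hu]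

lemma scale_eval (g : Polynomial ℤ) (p q : ℤ) (hq : q ≠ 0) :
    ((Polynomial.eval p (g.scaleRoots q) : ℤ) : ℚ)
      = (q : ℚ) ^ g.natDegree * (Polynomial.aeval ((p : ℚ)/(q : ℚ))) g := by
  have hq' : (q : ℚ) ≠ 0 := Int.cast_ne_zero.mpr hq
  have h0 := Polynomial.scaleRoots_eval₂_mul (Int.castRingHom ℚ) ((p : ℚ)/(q : ℚ)) q (p := g)
  have hpq : (Int.castRingHom ℚ) q * ((p : ℚ)/(q : ℚ)) = ((p : ℤ) : ℚ) := by
    field_simp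
    simp only [Int.coe_castRingHom]; ring
  rw [hpq] at h0
  rw [Polynomial.aeval_def, algebraMap_int_eq]
  have h1 : Polynomial.eval₂ (Int.castRingHom ℚ) ((p : ℤ) : ℚ) (g.scaleRoots q)
      = (q : ℚ) ^ g.natDegree * eval₂ (Int.castRingHom ℚ) ((p : ℚ)/(q : ℚ)) g := by
    simpa using h0
  rw [← h1, Polynomial.eval₂_eq_eval_map, Polynomial.eval_intCast_map]
  simp

lemma inv_pq_mem (p q : ℤ) (hp : 0 < p) (hq : 0 < q) (hcop : IsCoprime p q)
    (b : ℝ) (hb : b = (p : ℝ) / (q : ℝ)) :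
    (((p * q : ℤ) : ℝ))⁻¹ ∈ Subring.closure {b, b⁻¹} := by
  have hpne : (p : ℝ) ≠ 0 := Int.cast_ne_zero.mpr hp.ne'
  have hqne : (q : ℝ) ≠ 0 := Int.cast_ne_zero.mpr hq.ne'
  have h1 : IsCoprime p (p * p + q * q) := by
    have := (hcop.pow_right (n := 2)).add_mul_left_right p
    have h : q ^ 2 + p * p = p * p + q * q := by ring
    rwa [h] at this
  have h2 : IsCoprime q (p * p + q * q) := by
    have := (hcop.symm.pow_right (n := 2)).add_mul_left_right q
    have h : p ^ 2 + q * q = p * p + q * q := by ring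
    rwa [h] at this
  obtain ⟨u, v, huv⟩ := (h1.mul_left h2).symm
  have key : (((p * q : ℤ) : ℝ))⁻¹ = (v : ℝ) + (u : ℝ) * (b + b⁻¹) := by
    have hcast : (u : ℝ) * ((p:ℝ) * p + (q:ℝ) * q) + (v : ℝ) * ((p:ℝ) * q) = 1 := by
      exact_mod_cast congrArg (fun z : ℤ => (z : ℝ)) huv
    refine inv_eq_of_mul_eq_one_left ?_
    rw [hb, inv_div]
    push_cast
    field_simp
    linear_combination hcast
  rw [key]
  refine add_mem (intCast_mem _ v) (mul_mem (intCast_mem _ u) (add_mem ?_ ?_))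
  · exact Subring.subset_closure (by simp)
  · exact Subring.subset_closure (by simp)

/-- For an additive subgroup `G` of `ℝ²` (elements viewed as row vectors), `IG G` is the
set of invertible real `2 × 2` matrices `B` of the form `[[a,0],[0,b]]` or `[[0,a],[b,0]]`
with `a > 0`, `b > 0`, such that right multiplication by `B` maps `G` onto `G`. -/
def IG (G : AddSubgroup (Fin 2 → ℝ)) : Set (Matrix (Fin 2) (Fin 2) ℝ) :=
  {B | IsUnit B ∧
    (∃ a b : ℝ, 0 < a ∧ 0 < b ∧
      (B = Matrix.of ![![a, 0], ![0, b]] ∨ B = Matrix.of ![![0, a], ![b, 0]])) ∧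
    (fun v => Matrix.vecMul v B) '' (G : Set (Fin 2 → ℝ)) = (G : Set (Fin 2 → ℝ))}

theorem stmt5 (a b : ℝ) (ha : 0 < a) (halg : IsAlgebraic ℚ a) (ha1 : a ≠ 1)
    (p q : ℤ) (hp : 0 < p) (hq : 0 < q) (hcop : IsCoprime p q)
    (hb : b = (p : ℝ) / (q : ℝ)) (hb1 : b ≠ 1) (hab : a ≠ b)
    (G : AddSubgroup (Fin 2 → ℝ)) (h11 : (![1, 1] : Fin 2 → ℝ) ∈ G)
    (hinv : (fun v => Matrix.vecMul v (Matrix.of ![![a, 0], ![0, b]])) ''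
        (G : Set (Fin 2 → ℝ)) = (G : Set (Fin 2 → ℝ))) :
    {B : Matrix (Fin 2) (Fin 2) ℝ | ∃ n : ℤ, B = (Matrix.of ![![a, 0], ![0, b]]) ^ n} ⊂
      IG G := by
  have hADg : (Matrix.of ![![a, 0], ![0, b]] : Matrix (Fin 2) (Fin 2) ℝ) = Dg a b := rfl
  rw [hADg] at hinv ⊢
  set A := Dg a b with hA
  have hpR : (0:ℝ) < (p:ℝ) := by exact_mod_cast hp
  have hqR : (0:ℝ) < (q:ℝ) := by exact_mod_cast hq
  have hbpos : 0 < b := by rw [hb]; positivity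
  have hbne : b ≠ 0 := ne_of_gt hbpos
  have hane : a ≠ 0 := ne_of_gt ha
  -- membership helpers
  have hmemT : ∀ v ∈ G, Matrix.vecMul v A ∈ G := by
    intro v hv
    have : Matrix.vecMul v A ∈ (fun v => Matrix.vecMul v A) '' (G : Set (Fin 2 → ℝ)) :=
      Set.mem_image_of_mem _ hv
    rwa [hinv] at this
  have hmemTinv : ∀ v ∈ G, ∃ w ∈ G, Matrix.vecMul w A = v := by
    intro v hv
    have : v ∈ (fun v => Matrix.vecMul v A) '' (G : Set (Fin 2 → ℝ)) := by rw [hinv]; exact hv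
    obtain ⟨w, hw, hwv⟩ := this
    exact ⟨w, hw, hwv⟩
  have hAk : ∀ (k : ℕ), ∀ v ∈ G, Matrix.vecMul v (A ^ k) ∈ G := by
    intro k v hv
    have : Matrix.vecMul v (A ^ k) ∈ (fun v => Matrix.vecMul v (A ^ k)) '' (G : Set (Fin 2 → ℝ)) :=
      Set.mem_image_of_mem _ hv
    rwa [img_pow A _ hinv k] at this
  -- Good predicate
  set Good : ℝ → Prop := fun x => ∀ v ∈ G, (![0, x * v 1] : Fin 2 → ℝ) ∈ G with hGood
  have good_mul_b : ∀ x, Good x → Good (b * x) := by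
    intro x hx v hv
    have hw := hmemT v hv
    have heq : (![0, (b*x) * v 1] : Fin 2 → ℝ) = ![0, x * (Matrix.vecMul v A) 1] := by
      rw [hA, Dg_vecMul]
      funext j; fin_cases j <;> simp <;> ring
    rw [heq]
    exact hx _ hw
  have good_mul_binv : ∀ x, Good x → Good (b⁻¹ * x) := by
    intro x hx v hv
    obtain ⟨w, hw, hwv⟩ := hmemTinv v hv
    have hv1 : v 1 = b * w 1 := by
      rw [← hwv, hA, Dg_vecMul]; simp
    have heq : (![0, (b⁻¹*x) * v 1] : Fin 2 → ℝ) = ![0, x * w 1] := by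
      funext j; fin_cases j <;> simp [hv1]
      field_simp
    rw [heq]
    exact hx _ hw
  -- the polynomial
  set bq : ℚ := (p:ℚ)/(q:ℚ) with hbq
  have hbqb : ((bq : ℚ) : ℝ) = b := by rw [hb, hbq]; push_cast; ring
  obtain ⟨g, hga, hgbq⟩ := exists_int_poly a halg bq (by rw [hbqb]; exact hab)
  set c : ℝ := (Polynomial.aeval b) g with hc
  have hccast : ((Polynomial.aeval bq g : ℚ) : ℝ) = c := by
    rw [hc, ← hbqb]
    exact (Polynomial.aeval_algHom_apply ((algebraMap ℚ ℝ).toIntAlgHom) bq g).symm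
  have hcne : c ≠ 0 := by
    rw [← hccast]
    exact_mod_cast hgbq
  -- core : Good c
  have good_c : Good c := by
    intro v hv
    set D := g.natDegree + 1 with hD
    have husum : (∑ i ∈ Finset.range D, g.coeff i • Matrix.vecMul v (A ^ i)) ∈ G :=
      AddSubgroup.sum_mem G (fun i _ => AddSubgroup.zsmul_mem G (hAk i v hv) _)
    have hsum_eq : (∑ i ∈ Finset.range D, g.coeff i • Matrix.vecMul v (A ^ i))
        = ![(Polynomial.aeval a) g * v 0, (Polynomial.aeval b) g * v 1] := by
      have hterm : ∀ i, g.coeff i • Matrix.vecMul v (A ^ i)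
          = ![(g.coeff i • a ^ i) * v 0, (g.coeff i • b ^ i) * v 1] := by
        intro i
        rw [hA, Dg_pow, Dg_vecMul]
        funext j
        fin_cases j <;> simp [zsmul_eq_mul] <;> ring
      simp only [hterm]
      funext j
      rw [Finset.sum_apply]
      fin_cases j
      · simp only [Fin.mk_zero, Matrix.cons_val_zero]
        rw [← Finset.sum_mul, ← Polynomial.aeval_eq_sum_range' (Nat.lt_succ_self _) a]
      · simp only [Fin.mk_one, Matrix.cons_val_one, Matrix.head_cons, Matrix.cons_val_zero]
        rw [← Finset.sum_mul, ← Polynomial.aeval_eq_sum_range' (Nat.lt_succ_self _) b]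
    rw [hsum_eq, hga] at husum
    have hfinal : (![0, c * v 1] : Fin 2 → ℝ) = ![0 * v 0, (Polynomial.aeval b) g * v 1] := by
      funext j; fin_cases j <;> simp [hc]
    rw [hfinal]
    exact husum
  -- closure under R
  set R := Subring.closure ({b, b⁻¹} : Set ℝ) with hR
  have hmul_R : ∀ x ∈ R, ∀ y, Good y → Good (y * x) := by
    intro x hx
    refine Subring.closure_induction
      (p := fun z _ => ∀ y, Good y → Good (y * z)) ?_ ?_ ?_ ?_ ?_ ?_ hx
    · intro z hz y hy
      rcases hz with hz | hz
      · subst hz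
        rw [mul_comm]
        exact good_mul_b y hy
      · simp only [Set.mem_singleton_iff] at hz
        subst hz
        rw [mul_comm]
        exact good_mul_binv y hy
    · intro y hy v hv
      have h0 : (![(0:ℝ), 0] : Fin 2 → ℝ) = 0 := by
        funext j; fin_cases j <;> rfl
      simpa [h0] using AddSubgroup.zero_mem G
    · intro y hy
      simpa using hy
    · intro x₁ x₂ hx₁ hx₂ ih₁ ih₂ y hy v hv
      have h1 := ih₁ y hy v hv
      have h2 := ih₂ y hy v hv
      have heqn : (![0, (y * (x₁ + x₂)) * v 1] : Fin 2 → ℝ)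
          = ![0, (y * x₁) * v 1] + ![0, (y * x₂) * v 1] := by
        funext j; fin_cases j <;> simp <;> ring
      rw [heqn]
      exact AddSubgroup.add_mem G h1 h2
    · intro x₁ hx₁ ih y hy v hv
      have h1 := ih y hy v hv
      have heqn : (![0, (y * (-x₁)) * v 1] : Fin 2 → ℝ) = -(![0, (y * x₁) * v 1]) := by
        funext j; fin_cases j <;> simp <;> ring
      rw [heqn]
      exact AddSubgroup.neg_mem G h1
    · intro x₁ x₂ hx₁ hx₂ ih₁ ih₂ y hy
      have heqn : y * (x₁ * x₂) = (y * x₁) * x₂ := by ring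
      rw [heqn]
      exact ih₂ (y * x₁) (ih₁ y hy)
  -- arithmetic
  set PQ : ℤ := p * q with hPQ
  have hPQpos : 0 < PQ := mul_pos hp hq
  have hPQ2 : 2 ≤ PQ := by
    rcases eq_or_lt_of_le (show (1:ℤ) ≤ PQ by omega) with h | h
    · exfalso
      have hp1 : p = 1 ∧ q = 1 := by
        constructor <;> nlinarith
      apply hb1
      rw [hb, hp1.1, hp1.2]
      norm_num
    · omega
  have hPQR : (2:ℝ) ≤ (PQ:ℝ) := by exact_mod_cast hPQ2
  have hPQRne : (PQ:ℝ) ≠ 0 := by positivity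
  set d := g.natDegree with hd
  set N : ℤ := Polynomial.eval p (g.scaleRoots q) with hN
  have hNcast : (N:ℚ) = (q:ℚ)^d * Polynomial.aeval bq g := scale_eval g p q hq.ne'
  have hNne : N ≠ 0 := by
    intro h
    rw [h] at hNcast
    push_cast at hNcast
    have hqd : ((q:ℚ))^d ≠ 0 := by positivity
    exact hgbq ((mul_eq_zero.mp hNcast.symm).resolve_left hqd)
  obtain ⟨t, e, ht1, u, hu⟩ := key_arith PQ N hNne
  have hNR : (N:ℝ) = (q:ℝ)^d * c := by
    rw [← hccast]
    exact_mod_cast congrArg (fun z : ℚ => (z : ℝ)) hNcast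
  set β : ℝ := (PQ : ℝ)^t with hβ
  have hβ1 : 1 < β := by
    rw [hβ]
    apply one_lt_pow₀
    · linarith
    · omega
  have hβ0 : 0 < β := lt_trans one_pos hβ1
  have hβne : β ≠ 0 := ne_of_gt hβ0
  -- the correction elements
  have hinvPQ : ((PQ:ℝ))⁻¹ ∈ R := by
    rw [hPQ]
    push_cast
    have := inv_pq_mem p q hp hq hcop b hb
    push_cast at this
    exact this
  set x₁ : ℝ := (q:ℝ)^d * (u:ℝ) * ((PQ:ℝ)⁻¹)^e with hx₁
  have hx₁R : x₁ ∈ R := by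
    refine mul_mem (mul_mem (pow_mem ?_ d) ?_) (pow_mem hinvPQ e)
    · exact_mod_cast intCast_mem R q
    · exact intCast_mem R u
  set x₂ : ℝ := -(x₁ * ((PQ:ℝ)⁻¹)^t) with hx₂
  have hx₂R : x₂ ∈ R := neg_mem (mul_mem hx₁R (pow_mem hinvPQ t))
  have huR : ((PQ:ℝ))^e * (β - 1) = (N:ℝ) * (u:ℝ) := by
    rw [hβ]
    exact_mod_cast congrArg (fun z : ℤ => (z : ℝ)) hu
  have hlam1 : β - 1 = c * x₁ := by
    have hPe : ((PQ:ℝ))^e ≠ 0 := pow_ne_zero _ hPQRne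
    rw [hx₁, inv_pow]
    have key : c * ((q:ℝ)^d * (u:ℝ) * ((PQ:ℝ)^e)⁻¹) = ((N:ℝ) * u) * ((PQ:ℝ)^e)⁻¹ := by
      rw [hNR]; ring
    rw [key, eq_mul_inv_iff_mul_eq₀ hPe]
    linear_combination huR
  have hlam2 : β⁻¹ - 1 = c * x₂ := by
    rw [hx₂]
    have hstep : c * -(x₁ * ((PQ:ℝ)⁻¹)^t) = -((c * x₁) * ((PQ:ℝ)⁻¹)^t) := by ring
    rw [hstep, ← hlam1, inv_pow, ← hβ]
    field_simp
    ring
  have good₁ : Good (β - 1) := by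
    rw [hlam1]
    exact hmul_R x₁ hx₁R c good_c
  have good₂ : Good (β⁻¹ - 1) := by
    rw [hlam2]
    exact hmul_R x₂ hx₂R c good_c
  -- the witness
  set B : Matrix (Fin 2) (Fin 2) ℝ := Dg 1 β with hB
  have hBIG : B ∈ IG G := by
    refine ⟨?_, ⟨1, β, one_pos, hβ0, Or.inl rfl⟩, ?_⟩
    · rw [Matrix.isUnit_iff_isUnit_det, hB, Dg_det, one_mul]
      exact (isUnit_iff_ne_zero).mpr hβne
    · apply Set.Subset.antisymm
      · rintro _ ⟨v, hv, rfl⟩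
        show Matrix.vecMul v B ∈ (G : Set (Fin 2 → ℝ))
        have heq : Matrix.vecMul v B = v + ![0, (β - 1) * v 1] := by
          rw [hB, Dg_vecMul]
          funext j; fin_cases j <;> simp <;> ring
        rw [heq]
        exact AddSubgroup.add_mem G hv (good₁ v hv)
      · intro w hw
        refine ⟨w + ![0, (β⁻¹ - 1) * w 1], AddSubgroup.add_mem G hw (good₂ w hw), ?_⟩
        show Matrix.vecMul (w + ![0, (β⁻¹ - 1) * w 1]) B = w
        rw [hB, Dg_vecMul]
        funext j; fin_cases j
        · simp
        · simp
          field_simp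
          ring
  -- strictness
  have hsub : {B' : Matrix (Fin 2) (Fin 2) ℝ | ∃ n : ℤ, B' = A ^ n} ⊆ IG G := by
    rintro _ ⟨n, rfl⟩
    have hAz : A ^ n = Dg (a^n) (b^n) := by rw [hA]; exact Dg_zpow a b hane hbne n
    refine ⟨?_, ⟨a^n, b^n, zpow_pos ha n, zpow_pos hbpos n, Or.inl (by rw [hAz]; rfl)⟩, ?_⟩
    · rw [Matrix.isUnit_iff_isUnit_det, hAz, Dg_det]
      exact (isUnit_iff_ne_zero).mpr (mul_ne_zero (zpow_ne_zero n hane) (zpow_ne_zero n hbne))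
    · cases n with
      | ofNat k =>
          have : (A : Matrix (Fin 2) (Fin 2) ℝ) ^ (Int.ofNat k) = A ^ k := by
            rw [Int.ofNat_eq_coe, zpow_natCast]
          rw [this]
          exact img_pow A _ hinv k
      | negSucc k =>
          have : (A : Matrix (Fin 2) (Fin 2) ℝ) ^ (Int.negSucc k) = (A ^ (k+1))⁻¹ :=
            zpow_negSucc A k
          rw [this]
          apply img_inv
          · rw [hA, Dg_pow, Dg_det]
            exact (isUnit_iff_ne_zero).mpr
              (mul_ne_zero (pow_ne_zero _ hane) (pow_ne_zero _ hbne))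
          · exact img_pow A _ hinv (k+1)
  refine (Set.ssubset_iff_of_subset hsub).mpr ⟨B, hBIG, ?_⟩
  rintro ⟨n, hn⟩
  have hAz : A ^ n = Dg (a^n) (b^n) := by rw [hA]; exact Dg_zpow a b hane hbne n
  rw [hAz, hB] at hn
  have h00 : (1:ℝ) = a^n := by
    have := congrFun (congrFun hn 0) 0
    simpa [Dg] using this
  have h11' : β = b^n := by
    have := congrFun (congrFun hn 1) 1
    simpa [Dg] using this
  have hn0 : n = 0 := by
    have : a ^ n = a ^ (0:ℤ) := by rw [zpow_zero]; exact h00.symm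
    exact zpow_right_injective₀ ha ha1 this
  rw [hn0, zpow_zero] at h11'
  exact absurd h11' (ne_of_gt hβ1)
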